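/- arXiv:1207.2015 — 3 statements merged into one kernel-verified Lean document; each statement's English description precedes it below -/
import Mathlib

section
/- Let A be a unital C*-algebra and let ‖·‖' be a submultiplicative *-invariant norm on A with ‖x‖' ≤ ‖x‖ for all x, such that any ‖·‖-Cauchy sequence converging to 0 in ‖·‖' also converges to 0 in ‖·‖. Then the two norms are equivalent; in fact ‖x‖ ≤ ‖x‖' for all x, so the norms coincide on self-adjoint elements up to equivalence. -/
open Filter Topology

/-- Let `A` be a unital C*-algebra and `p` a submultiplicative, *-invariant norm
on `A` with `p x ≤ ‖x‖`, such that every `‖·‖`-Cauchy sequence with `p x_n → 0`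
satisfies `‖x_n‖ → 0` (compatibility). Then `‖x‖ ≤ p x` for all `x`, so the two
norms coincide. -/
theorem stmt_1 {A : Type*} [CStarAlgebra A] (p : A → ℝ)
    (p_nonneg : ∀ x, 0 ≤ p x)
    (p_eq_zero : ∀ x, p x = 0 → x = 0)
    (p_add : ∀ x y, p (x + y) ≤ p x + p y)
    (p_smul : ∀ (c : ℂ) (x : A), p (c • x) = ‖c‖ * p x)
    (p_mul : ∀ x y, p (x * y) ≤ p x * p y)
    (p_star : ∀ x, p (star x) = p x)
    (p_le : ∀ x, p x ≤ ‖x‖)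
    (compat : ∀ x : ℕ → A, CauchySeq x → Tendsto (fun n => p (x n)) atTop (𝓝 0) →
      Tendsto (fun n => ‖x n‖) atTop (𝓝 0)) :
    ∀ x : A, ‖x‖ ≤ p x := by
  intro x
  by_contra hx
  push_neg at hx
  set a : A := star x * x with ha_def
  have ha : IsSelfAdjoint a := IsSelfAdjoint.star_mul_self x
  have hN : ‖a‖ = ‖x‖ * ‖x‖ := CStarRing.norm_star_mul_self
  have hTN : p a < ‖a‖ := by
    have h1 : p a ≤ p (star x) * p x := p_mul _ _
    have h2 : p (star x) = p x := p_star x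
    have h3 : p x * p x < ‖x‖ * ‖x‖ := by
      nlinarith [p_nonneg x, norm_nonneg x]
    rw [hN]
    calc p a ≤ p (star x) * p x := h1
      _ = p x * p x := by rw [h2]
      _ < ‖x‖ * ‖x‖ := h3
  set T : ℝ := p a with hT_def
  set N : ℝ := ‖a‖ with hN_def
  have hT0 : 0 ≤ T := p_nonneg a
  have hN0 : 0 < N := lt_of_le_of_lt hT0 hTN
  have hA : Nontrivial A := by
    refine nontrivial_of_ne a 0 fun h => ?_
    rw [hN_def, h, norm_zero] at hN0
    exact lt_irrefl 0 hN0
  -- ‖a‖ ∈ spectrum ℝ a since a = x* x has nonnegative spectrum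
  have hNa : N ∈ spectrum ℝ a := by
    rcases CStarAlgebra.norm_or_neg_norm_mem_spectrum ha with h | h
    · exact h
    · exfalso
      have := spectrum_star_mul_self_nonneg _ h
      rw [← hN_def] at this
      linarith
  set t' : ℝ := (T + N) / 2 with ht'_def
  have hTt' : T < t' := by rw [ht'_def]; linarith
  have ht'N : t' < N := by rw [ht'_def]; linarith
  have ht'0 : 0 < t' := lt_of_le_of_lt hT0 hTt'
  set g : ℝ → ℝ := fun s => max 0 ((s - t') / (N - t')) with hg_def
  have hgc : Continuous g := by
    apply Continuous.max continuous_const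
    exact (continuous_id.sub continuous_const).div_const _
  set b : A := cfc g a with hb_def
  -- p (a ^ m) ≤ T ^ m
  have hpow : ∀ m : ℕ, p (a ^ m) ≤ T ^ m := by
    intro m
    induction m with
    | zero =>
      simpa using (p_le 1).trans (by simp)
    | succ m ih =>
      calc p (a ^ (m + 1)) = p (a ^ m * a) := by rw [pow_succ]
        _ ≤ p (a ^ m) * p a := p_mul _ _
        _ ≤ T ^ m * T := by
            exact mul_le_mul ih le_rfl hT0 (by positivity)
        _ = T ^ (m + 1) := by rw [pow_succ]
  -- key estimate : p b ≤ (t'⁻¹ * T) ^ m for every m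
  have key : ∀ m : ℕ, p b ≤ (t'⁻¹ * T) ^ m := by
    intro m
    set h : ℝ → ℝ := fun s => g s * ((max s t')⁻¹) ^ m with hh_def
    have hhc : Continuous h := by
      apply hgc.mul
      apply Continuous.pow
      apply Continuous.inv₀ (continuous_id.max continuous_const)
      intro s
      exact ne_of_gt (lt_of_lt_of_le ht'0 (le_max_right s t'))
    have hb_eq : b = cfc h a * a ^ m := by
      conv_rhs => rw [← cfc_pow_id (R := ℝ) a m ha,
        ← cfc_mul h _ a hhc.continuousOn (by fun_prop)]
      apply cfc_congr
      intro s _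
      show g s = h s * s ^ m
      by_cases hst : t' ≤ s
      · have hmax : max s t' = s := max_eq_left hst
        have hs0 : s ≠ 0 := ne_of_gt (lt_of_lt_of_le ht'0 hst)
        rw [hh_def]
        simp only [hmax]
        rw [mul_assoc, ← mul_pow, inv_mul_cancel₀ hs0, one_pow, mul_one]
      · push_neg at hst
        have hg0 : g s = 0 := by
          rw [hg_def]
          simp only [max_eq_left_iff]
          apply div_nonpos_of_nonpos_of_nonneg <;> linarith
        rw [hh_def]
        simp only [hg0, zero_mul]
    have hnorm : ‖cfc h a‖ ≤ (t'⁻¹) ^ m := by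
      apply norm_cfc_le (by positivity)
      intro s hs
      have hsN : |s| ≤ N := by
        simpa [hN_def] using spectrum.norm_le_norm_of_mem hs
      have hg1 : |g s| ≤ 1 := by
        rw [hg_def, abs_le]
        constructor
        · simp only []
          have : (0:ℝ) ≤ max 0 ((s - t') / (N - t')) := le_max_left _ _
          linarith
        · simp only [max_le_iff]
          refine ⟨by norm_num, ?_⟩
          rw [div_le_one (by linarith)]
          have : s ≤ N := (abs_le.mp hsN).2
          linarith
      have hmaxb : |((max s t')⁻¹) ^ m| ≤ (t'⁻¹) ^ m := by
        rw [abs_pow, abs_of_nonneg (inv_nonneg.mpr (le_trans ht'0.le (le_max_right s t')))]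
        apply pow_le_pow_left₀ (inv_nonneg.mpr (le_trans ht'0.le (le_max_right s t')))
        exact inv_anti₀ ht'0 (le_max_right s t')
      show |g s * ((max s t')⁻¹) ^ m| ≤ (t'⁻¹) ^ m
      rw [abs_mul]
      calc |g s| * |((max s t')⁻¹) ^ m| ≤ 1 * (t'⁻¹) ^ m :=
            mul_le_mul hg1 hmaxb (abs_nonneg _) zero_le_one
        _ = (t'⁻¹) ^ m := one_mul _
    calc p b = p (cfc h a * a ^ m) := by rw [hb_eq]
      _ ≤ p (cfc h a) * p (a ^ m) := p_mul _ _
      _ ≤ (t'⁻¹) ^ m * T ^ m := by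
          apply mul_le_mul ((p_le _).trans hnorm) (hpow m) (p_nonneg _) (by positivity)
      _ = (t'⁻¹ * T) ^ m := (mul_pow _ _ _).symm
  -- hence p b = 0 since t'⁻¹ * T < 1
  have hratio : t'⁻¹ * T < 1 := by
    rw [inv_mul_lt_iff₀ ht'0]
    linarith
  have hratio0 : 0 ≤ t'⁻¹ * T := by positivity
  have hpb0 : p b ≤ 0 := by
    have htend : Tendsto (fun m : ℕ => (t'⁻¹ * T) ^ m) atTop (𝓝 0) :=
      tendsto_pow_atTop_nhds_zero_of_lt_one hratio0 hratio
    exact ge_of_tendsto' htend key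
  have hb0 : b = 0 := p_eq_zero b (le_antisymm hpb0 (p_nonneg b))
  -- but 1 ∈ spectrum ℝ b, contradiction
  have h1b : (1 : ℝ) ∈ spectrum ℝ b := by
    rw [hb_def, cfc_map_spectrum g a ha hgc.continuousOn]
    refine ⟨N, hNa, ?_⟩
    rw [hg_def]
    simp only []
    rw [div_self (by linarith)]
    norm_num
  have : ‖(1 : ℝ)‖ ≤ ‖b‖ := spectrum.norm_le_norm_of_mem h1b
  rw [hb0, norm_zero, norm_one] at this
  linarith
end

section
/- There does not exist a normed *-algebra B (with submultiplicative *-invariant norm) containing a unital C*-algebra A as a proper dense *-subalgebra with the norm of B dominated by the C*-norm on A and the two norms compatible. -/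
open Filter Topology

/-- There is no normed *-algebra containing a unital C*-algebra as a proper
dense *-subalgebra, with norm dominated by and compatible with the C*-norm:
if `φ : A → B` is an injective *-homomorphism with dense range, `‖φ a‖ ≤ ‖a‖`,
and every `‖·‖`-Cauchy sequence in `A` whose image tends to `0` in `B`'s norm
tends to `0` in `A`, then `φ` is surjective (so `A = B`) and isometric
(so the norms are equivalent). -/
theorem stmt_2 {A B : Type*} [CStarAlgebra A]
    [NormedRing B] [StarRing B] [NormedStarGroup B] [NormedAlgebra ℂ B] [StarModule ℂ B]
    (φ : A →⋆ₐ[ℂ] B) (hinj : Function.Injective φ) (hdense : DenseRange φ)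
    (hle : ∀ a : A, ‖φ a‖ ≤ ‖a‖)
    (compat : ∀ x : ℕ → A, CauchySeq x →
      Tendsto (fun n => ‖φ (x n)‖) atTop (𝓝 0) → Tendsto (fun n => ‖x n‖) atTop (𝓝 0)) :
    Function.Surjective φ ∧ ∀ a : A, ‖φ a‖ = ‖a‖ := by
  -- Step 1: for nonnegative h, ‖h‖ ≤ ‖φ h‖
  have key : ∀ h : A, IsSelfAdjoint h → ‖h‖ ≤ ‖φ h‖ := by
    rcases subsingleton_or_nontrivial A with hA | hA
    · intro h _
      simp [Subsingleton.elim h (0 : A)]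
    intro h hsa
    obtain ⟨c, hcmem, hcabs⟩ : ∃ c : ℝ, c ∈ spectrum ℝ h ∧ |c| = ‖h‖ := by
      rcases CStarAlgebra.norm_or_neg_norm_mem_spectrum hsa with hmem | hmem
      · exact ⟨‖h‖, hmem, abs_of_nonneg (norm_nonneg h)⟩
      · exact ⟨-‖h‖, hmem, by rw [abs_neg, abs_of_nonneg (norm_nonneg h)]⟩
    refine le_of_forall_pos_le_add fun ε hε => ?_
    set g : ℝ → ℝ := fun t => min 1 (max 0 (2 - (2/ε) * |c - t|)) with hgdef
    set g' : ℝ → ℝ := fun t => max 0 (1 - (4/ε) * |c - t|) with hg'def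
    have hgcont : Continuous g := by fun_prop
    have hg'cont : Continuous g' := by fun_prop
    have hgg' : ∀ t, g t * g' t = g' t := by
      intro t
      rcases le_or_gt (ε/4) |c - t| with hcase | hcase
      · have h0 : g' t = 0 := by
          have h1 : (4/ε) * (ε/4) = 1 := by field_simp
          have h2 : (4/ε) * (ε/4) ≤ (4/ε) * |c - t| :=
            mul_le_mul_of_nonneg_left hcase (by positivity)
          simp only [hg'def]
          rw [max_eq_left]; linarith
        rw [h0, mul_zero]
      · have h1 : g t = 1 := by
          have h2 : (2/ε) * |c - t| ≤ (2/ε) * (ε/4) :=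
            mul_le_mul_of_nonneg_left hcase.le (by positivity)
          have h3 : (2/ε) * (ε/4) = 1/2 := by field_simp; ring
          simp only [hgdef]
          rw [min_eq_left]
          exact le_max_of_le_right (by linarith)
        rw [h1, one_mul]
    have hg01 : ∀ t, 0 ≤ g t ∧ g t ≤ 1 := fun t =>
      ⟨le_min zero_le_one (le_max_left _ _), min_le_left _ _⟩
    have hgbd : ∀ t, |(t - c) * g t| ≤ ε := by
      intro t
      rcases le_or_gt |c - t| ε with hcase | hcase
      · have := (hg01 t).1; have := (hg01 t).2
        calc |(t - c) * g t| = |t - c| * |g t| := abs_mul _ _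
          _ ≤ ε * 1 := by
              apply mul_le_mul ?_ ?_ (abs_nonneg _) hε.le
              · rwa [abs_sub_comm] at hcase
              · rw [abs_of_nonneg (hg01 t).1]; exact (hg01 t).2
          _ = ε := mul_one _
      · have h0 : g t = 0 := by
          have h1 : (2/ε) * ε ≤ (2/ε) * |c - t| :=
            mul_le_mul_of_nonneg_left hcase.le (by positivity)
          have h2 : (2/ε) * ε = 2 := by field_simp
          simp only [hgdef]
          rw [max_eq_left (by linarith), min_eq_right (by norm_num)]
        rw [h0, mul_zero, abs_zero]; exact hε.le
    have hg'c : g' c = 1 := by simp [hg'def]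
    set z : A := cfc g h with hz
    set w : A := cfc g' h with hw
    have hzw : z * w = w := by
      rw [hz, hw, ← cfc_mul g g' h]
      exact cfc_congr fun t _ => hgg' t
    have hwnorm : (1:ℝ) ≤ ‖w‖ := by
      have := norm_apply_le_norm_cfc g' h hcmem
      rwa [hg'c, norm_one] at this
    have hwne : w ≠ 0 := fun h0 => by simp [h0] at hwnorm; linarith
    have hφw : 0 < ‖φ w‖ := by
      rw [norm_pos_iff]
      intro h0
      exact hwne (hinj (by rw [h0, map_zero]))
    have hφz_le : ‖φ z‖ ≤ 1 := by
      refine (hle z).trans ?_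
      refine norm_cfc_le zero_le_one fun x _ => ?_
      rw [Real.norm_eq_abs, abs_of_nonneg (hg01 x).1]
      exact (hg01 x).2
    have hφz_ge : (1:ℝ) ≤ ‖φ z‖ := by
      have h1 : ‖φ w‖ ≤ ‖φ z‖ * ‖φ w‖ := by
        conv_lhs => rw [← hzw]
        rw [map_mul]
        exact norm_mul_le _ _
      have h2 : 1 * ‖φ w‖ ≤ ‖φ z‖ * ‖φ w‖ := by rw [one_mul]; exact h1
      exact le_of_mul_le_mul_right h2 hφw
    have hφz : ‖φ z‖ = 1 := le_antisymm hφz_le hφz_ge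
    -- the difference h*z - c•z is small
    have e1 : h * z = cfc (fun t => t * g t) h := by
      rw [cfc_mul (fun t => t) g h, cfc_id' ℝ h]
    have e2 : (c : ℂ) • z = cfc (fun t => c * g t) h := by
      rw [cfc_const_mul c g h, ← algebraMap_smul ℂ c z, Complex.coe_algebraMap]
    have hdiff : ‖h * z - (c : ℂ) • z‖ ≤ ε := by
      rw [e1, e2, ← cfc_sub (fun t => t * g t) (fun t => c * g t) h]
      refine norm_cfc_le hε.le fun x _ => ?_
      rw [Real.norm_eq_abs]
      have := hgbd x
      have heq : x * g x - c * g x = (x - c) * g x := by ring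
      rwa [heq]
    -- conclude
    have h1 : ‖φ (h * z)‖ ≤ ‖φ h‖ := by
      rw [map_mul]
      calc ‖φ h * φ z‖ ≤ ‖φ h‖ * ‖φ z‖ := norm_mul_le _ _
        _ = ‖φ h‖ := by rw [hφz, mul_one]
    have h2 : ‖φ ((c : ℂ) • z)‖ = ‖h‖ := by
      rw [map_smul, norm_smul, Complex.norm_real, Real.norm_eq_abs, hcabs, hφz, mul_one]
    have h3 : ‖φ ((c : ℂ) • z) - φ (h * z)‖ ≤ ε := by
      rw [← map_sub]
      refine (hle _).trans ?_
      rwa [norm_sub_rev]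
    calc ‖h‖ = ‖φ ((c : ℂ) • z)‖ := h2.symm
      _ ≤ ‖φ (h * z)‖ + ‖φ ((c : ℂ) • z) - φ (h * z)‖ := norm_le_insert' _ _
      _ ≤ ‖φ h‖ + ε := add_le_add h1 h3
  -- Step 2: isometry
  have hiso : ∀ a : A, ‖φ a‖ = ‖a‖ := by
    intro a
    refine le_antisymm (hle a) ?_
    have h1 : ‖a‖ * ‖a‖ = ‖star a * a‖ := (CStarRing.norm_star_mul_self).symm
    have h2 : ‖star a * a‖ ≤ ‖φ (star a * a)‖ := key _ (IsSelfAdjoint.star_mul_self a)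
    have h3 : ‖φ (star a * a)‖ ≤ ‖φ a‖ * ‖φ a‖ := by
      rw [map_mul, map_star]
      calc ‖star (φ a) * φ a‖ ≤ ‖star (φ a)‖ * ‖φ a‖ := norm_mul_le _ _
        _ = ‖φ a‖ * ‖φ a‖ := by rw [norm_star]
    nlinarith [norm_nonneg (φ a), norm_nonneg a]
  -- Step 3: surjectivity
  refine ⟨?_, hiso⟩
  have hisom : Isometry φ := AddMonoidHomClass.isometry_of_norm φ hiso
  have hcl : IsClosed (Set.range φ) := hisom.isClosedEmbedding.isClosed_range
  intro b
  have : b ∈ closure (Set.range φ) := hdense b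
  rwa [hcl.closure_eq] at this
end

section
/- Let A be a unital C*-algebra, (p_λ) a family of seminorms on A satisfying: for each λ there exist λ' and γ_λ > 0 with p_λ(xy) ≤ γ_λ‖x‖ p_{λ'}(y) for all commuting x, y ∈ A. If (x_α) is a net of commuting positive elements that is Cauchy with respect to all p_λ, then the net ((1 + x_α)⁻¹) is also Cauchy with respect to all p_λ. -/
/-- Auxiliary: norm of the inverse of `1 + x` with `0 ≤ x` is at most 1. -/
lemma inv_one_add_norm_le_one {A : Type*} [CStarAlgebra A] [PartialOrder A]
    [StarOrderedRing A] (u : Aˣ) (h1 : 1 ≤ (u : A)) : ‖(↑u⁻¹ : A)‖ ≤ 1 := by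
  have h0 : (0 : A) ≤ u := zero_le_one.trans h1
  have hinv0 : (0 : A) ≤ ↑u⁻¹ := CFC.inv_nonneg_of_nonneg u h0
  have hle : (↑u⁻¹ : A) ≤ 1 := CStarAlgebra.inv_le_one h1
  rcases subsingleton_or_nontrivial A with h|h
  · rw [Subsingleton.elim (↑u⁻¹ : A) 0, norm_zero]; norm_num
  · calc ‖(↑u⁻¹ : A)‖ ≤ ‖(1 : A)‖ := CStarAlgebra.norm_le_norm_of_nonneg_of_le hinv0 hle
      _ ≤ 1 := by rw [norm_one]

/-- Let `A` be a unital C*-algebra and `(p λ)` a family of seminorms satisfying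
condition (T₃): for each `λ` there are `λ'` and `γ λ > 0` with
`p λ (xy) ≤ γ λ ‖x‖ p λ' (y)` for all commuting `x, y`. If `(x α)` is a net of
pairwise commuting positive elements which is Cauchy for every `p λ`, then the
net `((1 + x α)⁻¹)` is Cauchy for every `p λ`. -/
theorem stmt_8 {A : Type*} [CStarAlgebra A] [PartialOrder A] [StarOrderedRing A]
    {Λ : Type*} (p : Λ → Seminorm ℂ A) (lam' : Λ → Λ) (γ : Λ → ℝ)
    (hγ : ∀ l, 0 < γ l)
    (hT3 : ∀ l (x y : A), Commute x y → p l (x * y) ≤ γ l * ‖x‖ * p (lam' l) y)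
    {ι : Type*} [Nonempty ι] [SemilatticeSup ι] (x : ι → A)
    (hpos : ∀ i, 0 ≤ x i) (hcomm : ∀ i j, Commute (x i) (x j))
    (hcauchy : ∀ l, ∀ δ : ℝ, 0 < δ → ∃ N, ∀ i j, N ≤ i → N ≤ j → p l (x i - x j) < δ) :
    ∀ l, ∀ δ : ℝ, 0 < δ → ∃ N, ∀ i j, N ≤ i → N ≤ j →
      p l (Ring.inverse (1 + x i) - Ring.inverse (1 + x j)) < δ := by
  intro l δ hδ
  -- units 1 + x i
  have hone : ∀ i, (1 : A) ≤ 1 + x i := fun i => le_add_of_nonneg_right (hpos i)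
  have hu : ∀ i, IsUnit (1 + x i) := fun i =>
    CStarAlgebra.isUnit_of_le 1 (hone i)
  set u : ι → Aˣ := fun i => (hu i).unit with hu_def
  have hu_coe : ∀ i, (u i : A) = 1 + x i := fun i => (hu i).unit_spec
  have hnorm : ∀ i, ‖(↑(u i)⁻¹ : A)‖ ≤ 1 := fun i =>
    inv_one_add_norm_le_one (u i) (by rw [hu_coe]; exact hone i)
  obtain ⟨N, hN⟩ := hcauchy (lam' (lam' l)) (δ / (γ l * γ (lam' l)))
    (div_pos hδ (mul_pos (hγ l) (hγ (lam' l))))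
  refine ⟨N, fun i j hi hj => ?_⟩
  -- key identity
  have key : Ring.inverse (1 + x i) - Ring.inverse (1 + x j)
      = ↑(u i)⁻¹ * (↑(u j)⁻¹ * (x j - x i)) := by
    rw [← hu_coe i, ← hu_coe j, Ring.inverse_unit, Ring.inverse_unit]
    have hc2' : Commute (x j - x i) ((u j : A)) := by
      rw [hu_coe]
      exact (Commute.one_right _).add_right ((hcomm j j).sub_left (hcomm i j))
    have hdiff : (u j : A) - (u i : A) = x j - x i := by
      rw [hu_coe, hu_coe]; abel
    calc (↑(u i)⁻¹ : A) - ↑(u j)⁻¹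
        = ↑(u i)⁻¹ * ((u j : A) - (u i : A)) * ↑(u j)⁻¹ := by
          simp [mul_sub, sub_mul, mul_assoc]
      _ = ↑(u i)⁻¹ * ((x j - x i) * ↑(u j)⁻¹) := by rw [hdiff, mul_assoc]
      _ = ↑(u i)⁻¹ * (↑(u j)⁻¹ * (x j - x i)) := by rw [hc2'.units_inv_right.eq]
  rw [key]
  -- commutation facts
  have hcall : ∀ a b : ι, Commute ((u a : A)) (x b) := fun a b => by
    rw [hu_coe]; exact (Commute.one_left _).add_left (hcomm a b)
  have hc1 : Commute (↑(u i)⁻¹ : A) (↑(u j)⁻¹ * (x j - x i)) := by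
    have h1 : Commute ((u i : A)) ((u j : A)) := by
      rw [hu_coe, hu_coe]
      exact (Commute.one_left _).add_left ((Commute.one_right _).add_right (hcomm i j))
    exact ((h1.units_inv_left.units_inv_right).mul_right
      (((hcall i j).units_inv_left.sub_right (hcall i i).units_inv_left)))
  have hc2 : Commute (↑(u j)⁻¹ : A) (x j - x i) :=
    (hcall j j).units_inv_left.sub_right (hcall j i).units_inv_left
  have step1 := hT3 l (↑(u i)⁻¹) (↑(u j)⁻¹ * (x j - x i)) hc1
  have step2 := hT3 (lam' l) (↑(u j)⁻¹) (x j - x i) hc2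
  have hxji : p (lam' (lam' l)) (x j - x i) < δ / (γ l * γ (lam' l)) := by
    have := hN j i hj hi
    exact this
  have hγl := hγ l
  have hγl' := hγ (lam' l)
  have b1 : γ l * ‖(↑(u i)⁻¹ : A)‖ * p (lam' l) (↑(u j)⁻¹ * (x j - x i))
      ≤ γ l * p (lam' l) (↑(u j)⁻¹ * (x j - x i)) := by
    have h1 : γ l * ‖(↑(u i)⁻¹ : A)‖ ≤ γ l := by
      nlinarith [hnorm i]
    exact mul_le_mul_of_nonneg_right h1 (apply_nonneg _ _)
  have b2 : γ (lam' l) * ‖(↑(u j)⁻¹ : A)‖ * p (lam' (lam' l)) (x j - x i)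
      ≤ γ (lam' l) * p (lam' (lam' l)) (x j - x i) := by
    have h1 : γ (lam' l) * ‖(↑(u j)⁻¹ : A)‖ ≤ γ (lam' l) := by
      nlinarith [hnorm j]
    exact mul_le_mul_of_nonneg_right h1 (apply_nonneg _ _)
  calc p l (↑(u i)⁻¹ * (↑(u j)⁻¹ * (x j - x i)))
      ≤ γ l * p (lam' l) (↑(u j)⁻¹ * (x j - x i)) := step1.trans b1
    _ ≤ γ l * (γ (lam' l) * p (lam' (lam' l)) (x j - x i)) := by
        have := step2.trans b2
        exact mul_le_mul_of_nonneg_left this hγl.le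
    _ < γ l * (γ (lam' l) * (δ / (γ l * γ (lam' l)))) := by
        apply mul_lt_mul_of_pos_left _ hγl
        exact mul_lt_mul_of_pos_left hxji hγl'
    _ = δ := by
        field_simp
end
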